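/- For all natural numbers n and T and every k : Fin n → ℕ, one has the integer identity ∑_{S ⊆ Fin n} (−1)^{n−|S|} · ((T + ∑_{i∈S} k(i) + n).choose n) = ∏ᵢ k(i), the sum being over all subsets S of Fin n. -/
import Mathlib

lemma tele (x m : ℕ) : ∀ K : ℕ,
    ((x + K + m + 1).choose (m + 1) : ℤ) - ((x + m + 1).choose (m + 1) : ℤ) =
      ∑ j ∈ Finset.range K, ((x + j + m + 1).choose m : ℤ) := by
  intro K
  induction K with
  | zero => simp
  | succ K ih =>
    rw [Finset.sum_range_succ, ← ih]
    have h : x + (K + 1) + m + 1 = (x + K + m + 1) + 1 := by ring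
    rw [h, Nat.choose_succ_succ (x + K + m + 1) m]
    push_cast
    ring

lemma aux {α : Type*} [DecidableEq α] (s : Finset α) (k : α → ℕ) : ∀ T : ℕ,
    ∑ S ∈ s.powerset, (-1 : ℤ) ^ (s.card - S.card) *
        (((T + ∑ i ∈ S, k i + s.card).choose s.card : ℤ)) =
      ∏ i ∈ s, (k i : ℤ) := by
  induction s using Finset.induction_on with
  | empty => intro T; simp
  | @insert a s ha ih =>
    intro T
    rw [Finset.sum_powerset_insert ha, Finset.prod_insert ha,
      Finset.card_insert_of_notMem ha]
    have key : ∀ S ∈ s.powerset,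
        (-1 : ℤ) ^ (s.card + 1 - S.card) * ((T + ∑ i ∈ S, k i + (s.card + 1)).choose (s.card + 1) : ℤ)
        + (-1 : ℤ) ^ (s.card + 1 - (insert a S).card) *
            ((T + ∑ i ∈ insert a S, k i + (s.card + 1)).choose (s.card + 1) : ℤ)
        = ∑ j ∈ Finset.range (k a), (-1 : ℤ) ^ (s.card - S.card) *
            (((T + j + 1) + ∑ i ∈ S, k i + s.card).choose s.card : ℤ) := by
      intro S hS
      rw [Finset.mem_powerset] at hS
      have haS : a ∉ S := fun h => ha (hS h)
      have hcard : S.card ≤ s.card := Finset.card_le_card hS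
      rw [Finset.card_insert_of_notMem haS, Finset.sum_insert haS]
      have h1 : s.card + 1 - S.card = (s.card - S.card) + 1 := by omega
      have h2 : s.card + 1 - (S.card + 1) = s.card - S.card := by omega
      rw [h1, h2, pow_succ]
      have harr : T + (k a + ∑ i ∈ S, k i) + (s.card + 1)
          = (T + ∑ i ∈ S, k i) + k a + s.card + 1 := by ring
      have harr2 : T + ∑ i ∈ S, k i + (s.card + 1)
          = (T + ∑ i ∈ S, k i) + s.card + 1 := by ring
      rw [harr, harr2]
      have := tele (T + ∑ i ∈ S, k i) s.card (k a)
      rw [show ∀ b c : ℤ, (-1 : ℤ)^(s.card - S.card) * (-1) * b + (-1:ℤ)^(s.card - S.card) * c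
          = (-1:ℤ)^(s.card - S.card) * (c - b) from fun b c => by ring]
      rw [this, Finset.mul_sum]
      apply Finset.sum_congr rfl
      intro j _
      have h3 : T + ∑ i ∈ S, k i + j + s.card + 1 = T + j + 1 + ∑ i ∈ S, k i + s.card := by
        ring
      rw [h3]
    rw [← Finset.sum_add_distrib, Finset.sum_congr rfl key, Finset.sum_comm]
    have : ∀ j ∈ Finset.range (k a),
        ∑ S ∈ s.powerset, (-1 : ℤ) ^ (s.card - S.card) *
          (((T + j + 1) + ∑ i ∈ S, k i + s.card).choose s.card : ℤ) = ∏ i ∈ s, (k i : ℤ) :=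
      fun j _ => ih (T + j + 1)
    rw [Finset.sum_congr rfl this, Finset.sum_const, Finset.card_range]
    ring

theorem finite_difference_choose (n T : ℕ) (k : Fin n → ℕ) :
    ∑ S : Finset (Fin n), (-1 : ℤ) ^ (n - S.card) *
        (((T + ∑ i ∈ S, k i + n).choose n : ℤ)) =
      ∏ i, (k i : ℤ) := by
  have := aux (Finset.univ : Finset (Fin n)) k T
  simpa [Finset.powerset_univ, Finset.card_univ] using this
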